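/- (Characterization of the recessive solution.) Let ν ∈ ℝ be such that system (S_ν) is nonoscillatory and eventually controllable, and let Z̃ = (X̃; Ũ) be a conjoined basis of (S_ν) and k₀ ∈ ℕ be such that X̃ₖ is invertible and −X̃ₖ^{−1} ℬₖ (X̃_{k+1}*)^{−1} is positive semidefinite for all k ≥ k₀. Then Z̃ is a recessive solution of (S_ν) if and only if the smallest eigenvalue of the Hermitian positive semidefinite matrix −Σ_{j=k₀}^{k} X̃_j^{−1} ℬ_j (X̃_{j+1}*)^{−1} tends to +∞ as k → ∞ (equivalently, for every c > 0 there exists K such that −Σ_{j=k₀}^{k} X̃_j^{−1} ℬ_j (X̃_{j+1}*)^{−1} − c·Iₙ is positive semidefinite for all k ≥ K). -/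

import Mathlib

open Matrix Filter
open scoped ComplexOrder

noncomputable def Jmat (n : ℕ) : Matrix (Fin n ⊕ Fin n) (Fin n ⊕ Fin n) ℂ :=
  Matrix.fromBlocks 0 1 (-1) 0

noncomputable def PsiMat {n : ℕ} (W : ℕ → Matrix (Fin n) (Fin n) ℂ) (k : ℕ) :
    Matrix (Fin n ⊕ Fin n) (Fin n ⊕ Fin n) ℂ :=
  Matrix.fromBlocks (W k) 0 0 0

noncomputable def Vmat {n : ℕ} (S : ℕ → Matrix (Fin n ⊕ Fin n) (Fin n ⊕ Fin n) ℂ)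
    (W : ℕ → Matrix (Fin n) (Fin n) ℂ) (k : ℕ) :
    Matrix (Fin n ⊕ Fin n) (Fin n ⊕ Fin n) ℂ :=
  -(Jmat n * PsiMat W k * S k)


section AuxAlgebra
variable {n : ℕ}

lemma wron_formula (X U X' U' : Matrix (Fin n) (Fin n) ℂ) :
    (Matrix.fromRows X U)ᴴ * Jmat n * Matrix.fromRows X' U' = Xᴴ * U' - Uᴴ * X' := by
  rw [Matrix.conjTranspose_fromRows_eq_fromCols_conjTranspose, Jmat,
    Matrix.fromCols_mul_fromBlocks, Matrix.fromCols_mul_fromRows]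
  simp only [Matrix.mul_zero, Matrix.mul_one, Matrix.mul_neg, zero_add, add_zero, Matrix.neg_mul]
  rw [sub_eq_neg_add]

lemma Snu_blocks (S : ℕ → Matrix (Fin n ⊕ Fin n) (Fin n ⊕ Fin n) ℂ)
    (A B C D W : ℕ → Matrix (Fin n) (Fin n) ℂ)
    (hblocks : ∀ k, S k = Matrix.fromBlocks (A k) (B k) (C k) (D k)) (nu : ℝ) (k : ℕ) :
    S k + (nu : ℂ) • Vmat S W k
      = Matrix.fromBlocks (A k) (B k) (C k + (nu : ℂ) • (W k * A k)) (D k + (nu : ℂ) • (W k * B k)) := by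
  rw [Vmat, Jmat, PsiMat, hblocks k, Matrix.fromBlocks_multiply, Matrix.fromBlocks_multiply]
  simp only [Matrix.zero_mul, Matrix.mul_zero, Matrix.one_mul, Matrix.mul_one, Matrix.neg_mul,
    zero_add, add_zero, Matrix.neg_mul, Matrix.mul_neg]
  ext (i|i) (j|j) <;>
    simp [Matrix.fromBlocks, Matrix.smul_apply, Matrix.neg_apply, Matrix.add_apply]

lemma fromRows_eq_iff {X U Y V : Matrix (Fin n) (Fin n) ℂ} :
    Matrix.fromRows X U = Matrix.fromRows Y V ↔ X = Y ∧ U = V := by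
  constructor
  · intro h
    constructor <;> ext i j
    · exact congrFun (congrFun h (Sum.inl i)) j
    · exact congrFun (congrFun h (Sum.inr i)) j
  · rintro ⟨rfl, rfl⟩; rfl

lemma unit_cancel_left {Y P Q : Matrix (Fin n) (Fin n) ℂ} (hY : IsUnit Y)
    (h : Y * P = Y * Q) : P = Q := by
  have hd : IsUnit Y.det := (Matrix.isUnit_iff_isUnit_det Y).mp hY
  calc P = Y⁻¹ * (Y * P) := by rw [← Matrix.mul_assoc, Matrix.nonsing_inv_mul Y hd, Matrix.one_mul]
  _ = Y⁻¹ * (Y * Q) := by rw [h]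
  _ = Q := by rw [← Matrix.mul_assoc, Matrix.nonsing_inv_mul Y hd, Matrix.one_mul]

lemma isUnit_conjTranspose {Y : Matrix (Fin n) (Fin n) ℂ} (hY : IsUnit Y) : IsUnit Yᴴ := by
  rw [Matrix.isUnit_iff_isUnit_det] at hY ⊢
  rw [Matrix.det_conjTranspose]
  exact hY.star

lemma key_step (A B Xk Xk1 Uk1 Yk Yk1 Vk1 : Matrix (Fin n) (Fin n) ℂ)
    (hY : Yk = A * Yk1 + B * Vk1)
    (hX : Xk = A * Xk1 + B * Uk1)
    (hWr : Yk1ᴴ * Uk1 - Vk1ᴴ * Xk1 = -1)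
    (hsym : Yk1ᴴ * Vk1 = Vk1ᴴ * Yk1)
    (hYk : IsUnit Yk) (hYk1 : IsUnit Yk1) :
    Yk⁻¹ * Xk = Yk1⁻¹ * Xk1 - Yk⁻¹ * B * (Yk1ᴴ)⁻¹ := by
  have hd1 : IsUnit Yk1.det := (Matrix.isUnit_iff_isUnit_det _).mp hYk1
  have hdk : IsUnit Yk.det := (Matrix.isUnit_iff_isUnit_det _).mp hYk
  have hH : IsUnit (Yk1ᴴ) := isUnit_conjTranspose hYk1
  have hdH : IsUnit (Yk1ᴴ).det := (Matrix.isUnit_iff_isUnit_det _).mp hH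
  have hU : Uk1 = Vk1 * (Yk1⁻¹ * Xk1) - (Yk1ᴴ)⁻¹ := by
    apply unit_cancel_left hH
    rw [Matrix.mul_sub, Matrix.mul_nonsing_inv _ hdH]
    have h1 : Yk1ᴴ * (Vk1 * (Yk1⁻¹ * Xk1)) = Vk1ᴴ * Xk1 := by
      rw [← Matrix.mul_assoc, hsym, Matrix.mul_assoc, ← Matrix.mul_assoc Yk1,
        Matrix.mul_nonsing_inv _ hd1, Matrix.one_mul]
    rw [h1]
    have h2 : Yk1ᴴ * Uk1 = Vk1ᴴ * Xk1 - 1 := by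
      have h3 := hWr; rw [sub_eq_iff_eq_add] at h3; rw [h3]; noncomm_ring
    rw [h2]
  have hXk : Xk = Yk * (Yk1⁻¹ * Xk1) - B * (Yk1ᴴ)⁻¹ := by
    rw [hX, hU, hY]
    rw [Matrix.add_mul, Matrix.mul_assoc A Yk1, ← Matrix.mul_assoc Yk1,
      Matrix.mul_nonsing_inv _ hd1, Matrix.one_mul, Matrix.mul_sub]
    noncomm_ring
  rw [hXk, Matrix.mul_sub, ← Matrix.mul_assoc, ← Matrix.mul_assoc,
    Matrix.nonsing_inv_mul _ hdk, Matrix.one_mul, Matrix.mul_assoc]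

lemma Jmat_mul_Jmat : Jmat n * Jmat n = -1 := by
  rw [Jmat, Matrix.fromBlocks_multiply]
  ext (i|i) (j|j) <;> simp [Matrix.fromBlocks, Matrix.one_apply]

lemma Jmat_conjTranspose : (Jmat n)ᴴ = -(Jmat n) := by
  rw [Jmat, Matrix.fromBlocks_conjTranspose]
  ext (i|i) (j|j) <;> simp [Matrix.fromBlocks]

lemma PsiMat_conjTranspose (W : ℕ → Matrix (Fin n) (Fin n) ℂ) (hW : ∀ k, (W k).PosDef) (k : ℕ) :
    (PsiMat W k)ᴴ = PsiMat W k := by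
  rw [PsiMat, Matrix.fromBlocks_conjTranspose]
  rw [(hW k).1.eq]
  ext (i|i) (j|j) <;> simp [Matrix.fromBlocks]

lemma PsiMat_J_PsiMat (W : ℕ → Matrix (Fin n) (Fin n) ℂ) (k : ℕ) :
    PsiMat W k * Jmat n * PsiMat W k = 0 := by
  rw [PsiMat, Jmat, Matrix.fromBlocks_multiply, Matrix.fromBlocks_multiply]
  ext (i|i) (j|j) <;> simp [Matrix.fromBlocks]

lemma J_mul_Vmat (S : ℕ → Matrix (Fin n ⊕ Fin n) (Fin n ⊕ Fin n) ℂ)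
    (W : ℕ → Matrix (Fin n) (Fin n) ℂ) (k : ℕ) :
    Jmat n * Vmat S W k = PsiMat W k * S k := by
  rw [Vmat, Matrix.mul_neg, ← Matrix.mul_assoc, ← Matrix.mul_assoc, Jmat_mul_Jmat]
  simp [Matrix.mul_assoc]

lemma Vmat_conjTranspose (S : ℕ → Matrix (Fin n ⊕ Fin n) (Fin n ⊕ Fin n) ℂ)
    (W : ℕ → Matrix (Fin n) (Fin n) ℂ) (hW : ∀ k, (W k).PosDef) (k : ℕ) :
    (Vmat S W k)ᴴ = (S k)ᴴ * PsiMat W k * Jmat n := by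
  rw [Vmat, Matrix.conjTranspose_neg, Matrix.conjTranspose_mul, Matrix.conjTranspose_mul,
    PsiMat_conjTranspose W hW, Jmat_conjTranspose]
  simp [Matrix.mul_assoc]

lemma Snu_symplectic (S : ℕ → Matrix (Fin n ⊕ Fin n) (Fin n ⊕ Fin n) ℂ)
    (W : ℕ → Matrix (Fin n) (Fin n) ℂ) (hS : ∀ k, (S k)ᴴ * Jmat n * S k = Jmat n)
    (hW : ∀ k, (W k).PosDef) (nu : ℝ) (k : ℕ) :
    (S k + (nu : ℂ) • Vmat S W k)ᴴ * Jmat n * (S k + (nu : ℂ) • Vmat S W k) = Jmat n := by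
  have hstar : ((nu:ℂ) • Vmat S W k)ᴴ = (nu:ℂ) • (Vmat S W k)ᴴ := by
    rw [Matrix.conjTranspose_smul, Complex.star_def, Complex.conj_ofReal]
  have hVJ : (Vmat S W k)ᴴ * Jmat n = -((S k)ᴴ * PsiMat W k) := by
    rw [Vmat_conjTranspose S W hW, Matrix.mul_assoc, Matrix.mul_assoc, Jmat_mul_Jmat]
    simp [Matrix.mul_assoc]
  have e2 : (Vmat S W k)ᴴ * Jmat n * S k = -((S k)ᴴ * (PsiMat W k * S k)) := by
    rw [hVJ]; simp [Matrix.mul_assoc]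
  have e3 : (S k)ᴴ * Jmat n * Vmat S W k = (S k)ᴴ * (PsiMat W k * S k) := by
    rw [Matrix.mul_assoc, J_mul_Vmat, ← Matrix.mul_assoc, Matrix.mul_assoc]
  have e4 : (Vmat S W k)ᴴ * Jmat n * Vmat S W k = 0 := by
    rw [Matrix.mul_assoc, J_mul_Vmat, Vmat_conjTranspose S W hW]
    calc (S k)ᴴ * PsiMat W k * Jmat n * (PsiMat W k * S k)
        = (S k)ᴴ * (PsiMat W k * Jmat n * PsiMat W k) * S k := by simp [Matrix.mul_assoc]
      _ = 0 := by rw [PsiMat_J_PsiMat]; simp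
  rw [Matrix.conjTranspose_add, hstar, Matrix.add_mul, Matrix.add_mul, Matrix.mul_add,
    Matrix.mul_add, hS k]
  rw [Matrix.smul_mul, Matrix.smul_mul, Matrix.mul_smul, Matrix.mul_smul]
  rw [e2, e3, Matrix.smul_mul, e4, smul_zero, smul_zero, smul_neg]
  abel

lemma Snu_isUnit (S : ℕ → Matrix (Fin n ⊕ Fin n) (Fin n ⊕ Fin n) ℂ)
    (W : ℕ → Matrix (Fin n) (Fin n) ℂ) (hS : ∀ k, (S k)ᴴ * Jmat n * S k = Jmat n)
    (hW : ∀ k, (W k).PosDef) (nu : ℝ) (k : ℕ) :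
    IsUnit (S k + (nu : ℂ) • Vmat S W k) := by
  apply (Matrix.isUnit_iff_isUnit_det _).mpr (Matrix.isUnit_det_of_left_inverse (B := -(Jmat n) * (S k + (nu : ℂ) • Vmat S W k)ᴴ * Jmat n) ?_)
  rw [Matrix.mul_assoc, Matrix.mul_assoc, ← Matrix.mul_assoc ((S k + (nu : ℂ) • Vmat S W k)ᴴ),
    Snu_symplectic S W hS hW nu k, Matrix.neg_mul, Jmat_mul_Jmat]
  simp

lemma sum_identity (A B Xt Ut X U : ℕ → Matrix (Fin n) (Fin n) ℂ) (k₀ : ℕ)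
    (hXtu : ∀ k, k₀ ≤ k → IsUnit (Xt k))
    (hXtrec : ∀ k, Xt k = A k * Xt (k+1) + B k * Ut (k+1))
    (hXrec : ∀ k, X k = A k * X (k+1) + B k * U (k+1))
    (hWr : ∀ k, (Xt k)ᴴ * U k - (Ut k)ᴴ * X k = -1)
    (hsymt : ∀ k, (Xt k)ᴴ * Ut k = (Ut k)ᴴ * Xt k) :
    ∀ k, k₀ ≤ k → (Xt (k+1))⁻¹ * X (k+1)
      = (Xt k₀)⁻¹ * X k₀
        - (-(∑ j ∈ Finset.Icc k₀ k, (Xt j)⁻¹ * B j * ((Xt (j+1))ᴴ)⁻¹)) := by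
  have hstep : ∀ k, k₀ ≤ k → (Xt (k+1))⁻¹ * X (k+1)
      = (Xt k)⁻¹ * X k + (Xt k)⁻¹ * B k * ((Xt (k+1))ᴴ)⁻¹ := by
    intro k hk
    have h := key_step (A k) (B k) (X k) (X (k+1)) (U (k+1)) (Xt k) (Xt (k+1)) (Ut (k+1))
      (hXtrec k) (hXrec k) (hWr (k+1)) (hsymt (k+1)) (hXtu k hk)
      (hXtu (k+1) (le_trans hk (Nat.le_succ k)))
    rw [h]; abel
  intro k hk
  induction k, hk using Nat.le_induction with
  | base =>
    rw [hstep k₀ le_rfl, Finset.Icc_self, Finset.sum_singleton, sub_neg_eq_add]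
  | succ k hk ih =>
    rw [hstep (k+1) (le_trans hk (Nat.le_succ k)), ih,
      Finset.sum_Icc_succ_top (le_trans hk (Nat.le_succ k))]
    abel

lemma psd_sum (s : Finset ℕ) (f : ℕ → Matrix (Fin n) (Fin n) ℂ)
    (h : ∀ j ∈ s, (f j).PosSemidef) : (∑ j ∈ s, f j).PosSemidef := by
  classical
  induction s using Finset.induction_on with
  | empty => simpa using Matrix.PosSemidef.zero
  | insert a s hnotmem ih =>
    rw [Finset.sum_insert hnotmem]
    exact (h _ (Finset.mem_insert_self _ _)).add (ih fun j hj => h j (Finset.mem_insert_of_mem hj))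

lemma psd_partial_mono (T : ℕ → Matrix (Fin n) (Fin n) ℂ) (k₀ : ℕ)
    (hT : ∀ j, k₀ ≤ j → (-(T j)).PosSemidef) (c : ℂ) {m k : ℕ} (hm : k₀ ≤ m) (hmk : m ≤ k)
    (h : (-(∑ j ∈ Finset.Icc k₀ m, T j) - c • 1).PosSemidef) :
    (-(∑ j ∈ Finset.Icc k₀ k, T j) - c • 1).PosSemidef := by
  have hu : Finset.Icc k₀ m ∪ Finset.Ioc m k = Finset.Icc k₀ k := by
    ext x
    simp only [Finset.mem_union, Finset.mem_Icc, Finset.mem_Ioc]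
    omega
  have hdisj : Disjoint (Finset.Icc k₀ m) (Finset.Ioc m k) := by
    rw [Finset.disjoint_left]
    intro x hx hx2
    simp only [Finset.mem_Icc] at hx
    simp only [Finset.mem_Ioc] at hx2
    omega
  have hsplit : ∑ j ∈ Finset.Icc k₀ k, T j
      = ∑ j ∈ Finset.Icc k₀ m, T j + ∑ j ∈ Finset.Ioc m k, T j := by
    rw [← hu, Finset.sum_union hdisj]
  have heq : -(∑ j ∈ Finset.Icc k₀ k, T j) - c • 1
      = (-(∑ j ∈ Finset.Icc k₀ m, T j) - c • 1) + ∑ j ∈ Finset.Ioc m k, -(T j) := by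
    rw [hsplit, Finset.sum_neg_distrib]
    abel
  rw [heq]
  exact h.add (psd_sum _ _ fun j hj => hT j (by
    simp only [Finset.mem_Ioc] at hj; omega))

end AuxAlgebra

/-- The quadratic functional `F_λ^{[M,N]}` associated with the system, where
`𝒞ₖ(λ) = 𝒞ₖ + λ𝒲ₖ𝒜ₖ` and `𝒟ₖ(λ) = 𝒟ₖ + λ𝒲ₖℬₖ`. -/
noncomputable def Fquad {n : ℕ} (A B C D W : ℕ → Matrix (Fin n) (Fin n) ℂ) (lam : ℝ)
    (x u : ℕ → Fin n → ℂ) (M N : ℕ) : ℂ :=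
  -(∑ k ∈ Finset.Icc M N,
      (star (x (k + 1)) ⬝ᵥ (((C k + (lam : ℂ) • (W k * A k))ᴴ * A k) *ᵥ x (k + 1))
        + 2 * ((star (x (k + 1)) ⬝ᵥ (((C k + (lam : ℂ) • (W k * A k))ᴴ * B k) *ᵥ u (k + 1))).re : ℂ)
        + star (u (k + 1)) ⬝ᵥ (((D k + (lam : ℂ) • (W k * B k))ᴴ * B k) *ᵥ u (k + 1))))

/-- System `(S_ν)` is disconjugate on `[M, N+1]`: for every admissible `z = (x; u)` on `[M,N]`
with `x_M = 0 = x_{N+1}` and `x` not identically zero on `[M,N+1]`, the value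
`F_ν^{[M,N]}(z)` is a positive real number. -/
def DisconjugateOn {n : ℕ} (A B C D W : ℕ → Matrix (Fin n) (Fin n) ℂ) (nu : ℝ)
    (M N : ℕ) : Prop :=
  ∀ x u : ℕ → Fin n → ℂ,
    (∀ k, M ≤ k → k ≤ N → x k = A k *ᵥ x (k + 1) + B k *ᵥ u (k + 1)) →
    x M = 0 → x (N + 1) = 0 →
    (∃ k, M ≤ k ∧ k ≤ N + 1 ∧ x k ≠ 0) →
    (Fquad A B C D W nu x u M N).im = 0 ∧ 0 < (Fquad A B C D W nu x u M N).re

/-- `Z` is a conjoined basis of system `(S_ν)`: a `2n×n` matrix solution with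
`rank Zₖ = n` and `Zₖ* 𝒥 Zₖ = 0` for all `k`. -/
def IsConjoinedBasis {n : ℕ} (S : ℕ → Matrix (Fin n ⊕ Fin n) (Fin n ⊕ Fin n) ℂ)
    (W : ℕ → Matrix (Fin n) (Fin n) ℂ) (nu : ℝ)
    (Z : ℕ → Matrix (Fin n ⊕ Fin n) (Fin n) ℂ) : Prop :=
  (∀ k, Z k = (S k + (nu : ℂ) • Vmat S W k) * Z (k + 1)) ∧
    ∀ k, (Z k).rank = n ∧ (Z k)ᴴ * Jmat n * Z k = 0

/-- `Z̃ = (X̃; Ũ)` is a recessive solution of `(S_ν)`: a conjoined basis such that for all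
sufficiently large `k` the matrix `X̃ₖ` is invertible with `−X̃ₖ⁻¹ ℬₖ (X̃_{k+1}*)⁻¹ ≥ 0`,
and for every conjoined basis `Z = (X; U)` normalized with `Z̃` (i.e. `Zₖ* 𝒥 Z̃ₖ = I`),
the matrix `Xₖ` is invertible for all large `k` and `Xₖ⁻¹ X̃ₖ → 0` as `k → ∞`. -/
def IsRecessive {n : ℕ} (S : ℕ → Matrix (Fin n ⊕ Fin n) (Fin n ⊕ Fin n) ℂ)
    (W B : ℕ → Matrix (Fin n) (Fin n) ℂ) (nu : ℝ)
    (Xt Ut : ℕ → Matrix (Fin n) (Fin n) ℂ) : Prop :=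
  IsConjoinedBasis S W nu (fun k => Matrix.fromRows (Xt k) (Ut k)) ∧
    (∃ k₀ : ℕ, ∀ k, k₀ ≤ k →
      IsUnit (Xt k) ∧ (-((Xt k)⁻¹ * B k * ((Xt (k + 1))ᴴ)⁻¹)).PosSemidef) ∧
    ∀ X U : ℕ → Matrix (Fin n) (Fin n) ℂ,
      IsConjoinedBasis S W nu (fun k => Matrix.fromRows (X k) (U k)) →
      (∀ k, (Matrix.fromRows (X k) (U k))ᴴ * Jmat n * Matrix.fromRows (Xt k) (Ut k) = 1) →
      (∃ k₁ : ℕ, ∀ k, k₁ ≤ k → IsUnit (X k)) ∧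
        Filter.Tendsto (fun k => (X k)⁻¹ * Xt k) Filter.atTop (nhds 0)

/-- The system is eventually controllable: there is `N` such that on any finite subinterval
`{K,…,M}` of `[N,∞)` the only `u` with `0 = ℬₖ u_{k+1}` and `uₖ = 𝒟ₖ u_{k+1}` for all
`k ∈ {K,…,M−1}` is the trivial one. -/
def EventuallyControllable {n : ℕ} (B D : ℕ → Matrix (Fin n) (Fin n) ℂ) : Prop :=
  ∃ N : ℕ, ∀ K M : ℕ, N ≤ K → K < M →
    ∀ u : ℕ → Fin n → ℂ,
      (∀ k, K ≤ k → k < M → B k *ᵥ u (k + 1) = 0 ∧ u k = D k *ᵥ u (k + 1)) →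
      ∀ k, K ≤ k → k ≤ M → u k = 0

/-- The strong Atkinson (definiteness) condition: there are `λ₀ ∈ ℂ` and `a ≤ b` in `ℕ`
such that every solution `z` of `(S_{λ₀})` with `Σ_{k=a}^{b} zₖ*Ψₖzₖ = 0` vanishes
identically. -/
def StrongAtkinson {n : ℕ} (S : ℕ → Matrix (Fin n ⊕ Fin n) (Fin n ⊕ Fin n) ℂ)
    (W : ℕ → Matrix (Fin n) (Fin n) ℂ) : Prop :=
  ∃ (lam0 : ℂ) (a b : ℕ), a ≤ b ∧
    ∀ z : ℕ → (Fin n ⊕ Fin n) → ℂ,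
      (∀ k, z k = (S k + lam0 • Vmat S W k) *ᵥ z (k + 1)) →
      (∑ k ∈ Finset.Icc a b, star (z k) ⬝ᵥ (PsiMat W k *ᵥ z k)) = 0 →
      ∀ k, z k = 0

section AuxAnalysis
variable {n : ℕ}

noncomputable def toE (v : Fin n → ℂ) : EuclideanSpace ℂ (Fin n) :=
  (WithLp.equiv 2 (Fin n → ℂ)).symm v

lemma toE_sub (v w : Fin n → ℂ) : toE (v - w) = toE v - toE w := rfl

lemma toE_norm_sq (v : Fin n → ℂ) : (star v) ⬝ᵥ v = ((‖toE v‖ : ℂ))^2 := by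
  have := (EuclideanSpace.inner_toLp_toLp (𝕜 := ℂ) (ι := Fin n) v v).trans (dotProduct_comm _ _)
  rw [← this]
  rw [inner_self_eq_norm_sq_to_K]
  rfl

lemma cauchy_schwarz_dot (v w : Fin n → ℂ) : ‖(star v) ⬝ᵥ w‖ ≤ ‖toE v‖ * ‖toE w‖ := by
  have := (EuclideanSpace.inner_toLp_toLp (𝕜 := ℂ) (ι := Fin n) v w).trans (dotProduct_comm _ _)
  rw [← this]
  exact norm_inner_le_norm _ _

lemma entry_le_toE_norm (v : Fin n → ℂ) (i : Fin n) : ‖v i‖ ≤ ‖toE v‖ := by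
  rw [EuclideanSpace.norm_eq]
  have h1 : ‖v i‖ ^ 2 ≤ ∑ j, ‖toE v j‖ ^ 2 := by
    have : ‖v i‖ ^ 2 = ‖toE v i‖ ^ 2 := rfl
    rw [this]
    exact Finset.single_le_sum (f := fun j => ‖toE v j‖ ^ 2)
      (fun j _ => sq_nonneg _) (Finset.mem_univ i)
  calc ‖v i‖ = Real.sqrt (‖v i‖ ^ 2) := by rw [Real.sqrt_sq (norm_nonneg _)]
  _ ≤ Real.sqrt (∑ j, ‖toE v j‖ ^ 2) := Real.sqrt_le_sqrt h1

/-- Frobenius-type bound for `mulVec`. -/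
noncomputable def frob (Q : Matrix (Fin n) (Fin n) ℂ) : ℝ :=
  Real.sqrt (∑ i, ∑ j, ‖Q i j‖ ^ 2)

lemma frob_nonneg (Q : Matrix (Fin n) (Fin n) ℂ) : 0 ≤ frob Q := Real.sqrt_nonneg _

lemma mulVec_norm_le (Q : Matrix (Fin n) (Fin n) ℂ) (v : Fin n → ℂ) :
    ‖toE (Q *ᵥ v)‖ ≤ frob Q * ‖toE v‖ := by
  have hrow : ∀ i, ‖(Q *ᵥ v) i‖ ≤ Real.sqrt (∑ j, ‖Q i j‖ ^ 2) * ‖toE v‖ := by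
    intro i
    have h1 : (Q *ᵥ v) i = star (star (Q i ·)) ⬝ᵥ v := by
      simp [Matrix.mulVec, dotProduct]
    rw [h1]
    refine (cauchy_schwarz_dot _ _).trans ?_
    gcongr
    rw [EuclideanSpace.norm_eq]
    apply Real.sqrt_le_sqrt
    apply le_of_eq
    congr 1
    ext j
    simp [toE]
  have hnn : (0:ℝ) ≤ ‖toE v‖ := norm_nonneg _
  rw [EuclideanSpace.norm_eq]
  have h2 : ∑ i, ‖toE (Q *ᵥ v) i‖ ^ 2 ≤ (∑ i, ∑ j, ‖Q i j‖ ^ 2) * ‖toE v‖ ^ 2 := by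
    rw [Finset.sum_mul]
    apply Finset.sum_le_sum
    intro i _
    have : ‖toE (Q *ᵥ v) i‖ = ‖(Q *ᵥ v) i‖ := rfl
    rw [this]
    calc ‖(Q *ᵥ v) i‖ ^ 2 ≤ (Real.sqrt (∑ j, ‖Q i j‖ ^ 2) * ‖toE v‖) ^ 2 := by
          apply sq_le_sq' _ (hrow i)
          have := hrow i
          nlinarith [norm_nonneg ((Q *ᵥ v) i), Real.sqrt_nonneg (∑ j, ‖Q i j‖ ^ 2), hnn]
    _ = (∑ j, ‖Q i j‖ ^ 2) * ‖toE v‖ ^ 2 := by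
          rw [mul_pow, Real.sq_sqrt (Finset.sum_nonneg fun j _ => sq_nonneg _)]
  calc Real.sqrt (∑ i, ‖toE (Q *ᵥ v) i‖ ^ 2)
      ≤ Real.sqrt ((∑ i, ∑ j, ‖Q i j‖ ^ 2) * ‖toE v‖ ^ 2) := Real.sqrt_le_sqrt h2
  _ = frob Q * ‖toE v‖ := by
      rw [Real.sqrt_mul (Finset.sum_nonneg fun i _ => Finset.sum_nonneg fun j _ => sq_nonneg _),
        Real.sqrt_sq hnn, frob]

lemma frob_le_of_entries (Q : Matrix (Fin n) (Fin n) ℂ) (d : ℝ) (hd : 0 ≤ d)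
    (h : ∀ i j, ‖Q i j‖ ≤ d) : frob Q ≤ n * d := by
  have h2 : ∑ i, ∑ j, ‖Q i j‖ ^ 2 ≤ (n:ℝ)^2 * d^2 := by
    calc ∑ i, ∑ j, ‖Q i j‖ ^ 2 ≤ ∑ i : Fin n, ∑ j : Fin n, d ^ 2 := by
          apply Finset.sum_le_sum; intro i _; apply Finset.sum_le_sum; intro j _
          exact pow_le_pow_left₀ (norm_nonneg _) (h i j) 2
    _ = (n:ℝ)^2 * d^2 := by simp [Finset.sum_const]; ring
  calc frob Q ≤ Real.sqrt ((n:ℝ)^2 * d^2) := Real.sqrt_le_sqrt h2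
  _ = n * d := by
      rw [Real.sqrt_mul (sq_nonneg _), Real.sqrt_sq (by positivity), Real.sqrt_sq hd]

lemma psd_mulVec_lower {N : Matrix (Fin n) (Fin n) ℂ} {c : ℝ}
    (hN : (N - (c:ℂ) • (1 : Matrix (Fin n) (Fin n) ℂ)).PosSemidef) (v : Fin n → ℂ) :
    c * ‖toE v‖ ^ 2 ≤ ‖toE (N *ᵥ v)‖ * ‖toE v‖ := by
  have h0 := hN.dotProduct_mulVec_nonneg v
  have hsub : star v ⬝ᵥ ((N - (c:ℂ) • 1) *ᵥ v)
      = star v ⬝ᵥ (N *ᵥ v) - (c:ℂ) * (star v ⬝ᵥ v) := by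
    rw [Matrix.sub_mulVec]
    rw [dotProduct_sub]
    congr 1
    rw [Matrix.smul_mulVec, Matrix.one_mulVec, dotProduct_smul]
    simp [smul_eq_mul]
  have hreal : c * ‖toE v‖ ^ 2 ≤ (star v ⬝ᵥ (N *ᵥ v)).re := by
    rw [hsub] at h0
    have h1 : ((star v ⬝ᵥ (N *ᵥ v)) - (c:ℂ) * (star v ⬝ᵥ v)).re ≥ 0 := by
      rw [Complex.le_def] at h0
      exact h0.1
    rw [toE_norm_sq] at h1
    have h2 : ((c:ℂ) * ((‖toE v‖:ℂ))^2).re = c * ‖toE v‖^2 := by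
      rw [← Complex.ofReal_pow, ← Complex.ofReal_mul, Complex.ofReal_re]
    rw [Complex.sub_re, h2] at h1
    linarith
  calc c * ‖toE v‖ ^ 2 ≤ (star v ⬝ᵥ (N *ᵥ v)).re := hreal
  _ ≤ ‖star v ⬝ᵥ (N *ᵥ v)‖ := Complex.re_le_norm _
  _ ≤ ‖toE v‖ * ‖toE (N *ᵥ v)‖ := cauchy_schwarz_dot _ _
  _ = ‖toE (N *ᵥ v)‖ * ‖toE v‖ := mul_comm _ _

lemma lower_bound_mulVec {P N : Matrix (Fin n) (Fin n) ℂ} {b c : ℝ}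
    (hb : ∀ v, ‖toE (P *ᵥ v)‖ ≤ b * ‖toE v‖) (hbc : b < c)
    (hN : (N - (c:ℂ) • (1 : Matrix (Fin n) (Fin n) ℂ)).PosSemidef) (v : Fin n → ℂ) :
    (c - b) * ‖toE v‖ ≤ ‖toE ((P - N) *ᵥ v)‖ := by
  rcases eq_or_ne v 0 with rfl | hv
  · simp [toE, Matrix.mulVec_zero]
  have hvn : 0 < ‖toE v‖ := by
    rw [norm_pos_iff]
    intro h
    apply hv
    have : ∀ i, v i = 0 := fun i => congrArg (fun w : EuclideanSpace ℂ (Fin n) => w i) h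
    funext i; exact this i
  have hNlow : c * ‖toE v‖ ≤ ‖toE (N *ᵥ v)‖ := by
    have := psd_mulVec_lower hN v
    rw [pow_two, ← mul_assoc] at this
    exact le_of_mul_le_mul_right this hvn
  have hsplit : toE ((P - N) *ᵥ v) = toE (P *ᵥ v) - toE (N *ᵥ v) := by
    rw [Matrix.sub_mulVec]; rfl
  calc (c - b) * ‖toE v‖ = c * ‖toE v‖ - b * ‖toE v‖ := by ring
  _ ≤ ‖toE (N *ᵥ v)‖ - ‖toE (P *ᵥ v)‖ := by
      have := hb v; linarith
  _ ≤ ‖toE (N *ᵥ v) - toE (P *ᵥ v)‖ := norm_sub_norm_le _ _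
  _ = ‖toE ((P - N) *ᵥ v)‖ := by rw [hsplit, ← norm_neg]; congr 1; abel

lemma isUnit_and_inv_entry_bound {P N : Matrix (Fin n) (Fin n) ℂ} {b c : ℝ}
    (hb : ∀ v, ‖toE (P *ᵥ v)‖ ≤ b * ‖toE v‖) (hbc : b < c)
    (hN : (N - (c:ℂ) • (1 : Matrix (Fin n) (Fin n) ℂ)).PosSemidef) :
    IsUnit (P - N) ∧ ∀ i j, ‖((P - N)⁻¹) i j‖ ≤ (c - b)⁻¹ := by
  have hpos : 0 < c - b := by linarith
  have hker : ∀ v, (P - N) *ᵥ v = 0 → v = 0 := by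
    intro v hv
    have hlow := lower_bound_mulVec hb hbc hN v
    rw [hv] at hlow
    have h0 : ‖toE (0 : Fin n → ℂ)‖ = 0 := norm_zero
    rw [h0] at hlow
    have h1 : ‖toE v‖ ≤ 0 := by nlinarith
    have hz : toE v = 0 := by rwa [← norm_le_zero_iff]
    funext i
    exact congrArg (fun w : EuclideanSpace ℂ (Fin n) => w i) hz
  have hinj : Function.Injective ((P - N).mulVec) := by
    intro x y hxy
    have h1 : (P - N) *ᵥ (x - y) = 0 := by
      rw [Matrix.mulVec_sub, hxy, sub_self]
    have := hker _ h1
    rwa [sub_eq_zero] at this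
  have hunit : IsUnit (P - N) := Matrix.mulVec_injective_iff_isUnit.mp hinj
  refine ⟨hunit, fun i j => ?_⟩
  have hdet : IsUnit (P - N).det := (Matrix.isUnit_iff_isUnit_det _).mp hunit
  set Q := (P - N)⁻¹ with hQ
  have hQv : ∀ w, (P - N) *ᵥ (Q *ᵥ w) = w := by
    intro w
    rw [Matrix.mulVec_mulVec, Matrix.mul_nonsing_inv _ hdet, Matrix.one_mulVec]
  have hle : ∀ w, (c - b) * ‖toE (Q *ᵥ w)‖ ≤ ‖toE w‖ := by
    intro w
    have := lower_bound_mulVec hb hbc hN (Q *ᵥ w)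
    rwa [hQv w] at this
  have hcol : ‖Q i j‖ ≤ ‖toE (Q *ᵥ Pi.single j 1)‖ := by
    have : (Q *ᵥ Pi.single j 1) i = Q i j := by
      rw [Matrix.mulVec_single]
      simp
    rw [← this]
    exact entry_le_toE_norm _ i
  have hsingle : ‖toE (Pi.single j (1:ℂ))‖ = 1 := by
    have : toE (Pi.single j (1:ℂ)) = EuclideanSpace.single j (1:ℂ) := rfl
    rw [this, EuclideanSpace.norm_single]
    simp
  have := hle (Pi.single j 1)
  rw [hsingle] at this
  have h3 : (c - b) * ‖Q i j‖ ≤ 1 := (mul_le_mul_of_nonneg_left hcol hpos.le).trans this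
  rw [inv_eq_one_div, le_div_iff₀ hpos]
  linarith

lemma smul_one_isHermitian {c : ℝ} :
    ((c:ℂ) • (1 : Matrix (Fin n) (Fin n) ℂ)).IsHermitian := by
  unfold Matrix.IsHermitian
  rw [Matrix.conjTranspose_smul, Matrix.conjTranspose_one, Complex.star_def,
    Complex.conj_ofReal]

lemma exists_norm_ge {H : Matrix (Fin n) (Fin n) ℂ} {c : ℝ} (hc : 0 < c)
    (hH : H.PosSemidef) (hnot : ¬ (H - (c:ℂ) • (1 : Matrix (Fin n) (Fin n) ℂ)).PosSemidef)
    (hUnit : IsUnit ((1 : Matrix (Fin n) (Fin n) ℂ) - H)) :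
    ∃ v : Fin n → ℂ, ‖toE v‖ = 1 ∧ (1+c)⁻¹ ≤ ‖toE (((1 : Matrix (Fin n) (Fin n) ℂ) - H)⁻¹ *ᵥ v)‖ := by
  have hH' : (H - (c:ℂ) • (1 : Matrix (Fin n) (Fin n) ℂ)).IsHermitian :=
    hH.1.sub smul_one_isHermitian
  -- some eigenvalue of H - c•1 is negative
  have hev : ∃ i, hH'.eigenvalues i < 0 := by
    by_contra hall
    push_neg at hall
    exact hnot ((Matrix.IsHermitian.posSemidef_iff_eigenvalues_nonneg hH').mpr hall)
  obtain ⟨i, hi⟩ := hev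
  set u : EuclideanSpace ℂ (Fin n) := hH'.eigenvectorBasis i with hu
  have hnorm : ‖u‖ = 1 := hH'.eigenvectorBasis.orthonormal.1 i
  have heig : (H - (c:ℂ) • 1) *ᵥ ⇑u = hH'.eigenvalues i • ⇑u :=
    hH'.mulVec_eigenvectorBasis i
  set μ : ℝ := hH'.eigenvalues i with hmu
  set t : ℝ := μ + c with ht
  -- H *ᵥ u = t • u
  have heigH : H *ᵥ ⇑u = t • ⇑u := by
    have h1 : H *ᵥ ⇑u = (H - (c:ℂ) • 1) *ᵥ ⇑u + ((c:ℂ) • (1:Matrix (Fin n) (Fin n) ℂ)) *ᵥ ⇑u := by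
      rw [← Matrix.add_mulVec, sub_add_cancel]
    rw [h1, heig, Matrix.smul_mulVec, Matrix.one_mulVec]
    funext j
    simp [ht, Pi.smul_apply, smul_eq_mul, Complex.real_smul]
    push_cast
    ring
  -- the vector as a plain function
  set v : Fin n → ℂ := WithLp.equiv 2 (Fin n → ℂ) u with hv
  have htoE : toE v = u := rfl
  have hvnorm : ‖toE v‖ = 1 := by rw [htoE]; exact hnorm
  -- t ≥ 0
  have hself : star v ⬝ᵥ v = 1 := by
    have h1 := toE_norm_sq v
    rw [hvnorm] at h1
    simpa using h1
  have ht0 : 0 ≤ t := by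
    have h2 := hH.dotProduct_mulVec_nonneg v
    have h3 : H *ᵥ v = t • v := heigH
    rw [h3] at h2
    have h4 : star v ⬝ᵥ (t • v) = (t:ℂ) := by
      have : star v ⬝ᵥ (t • v) = (t:ℂ) * (star v ⬝ᵥ v) := by
        rw [dotProduct_smul]
        simp [Complex.real_smul]
      rw [this, hself, mul_one]
    rw [h4] at h2
    rw [Complex.le_def] at h2
    simpa using h2.1
  have htc : t < c := by simp only [ht]; linarith
  have hne : (1:ℝ) - t ≠ 0 := by
    intro h10
    have h11 : t = 1 := by linarith
    -- then (1 - H) *ᵥ v = 0, contradicting invertibility since v ≠ 0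
    have h12 : ((1:Matrix (Fin n) (Fin n) ℂ) - H) *ᵥ v = 0 := by
      rw [Matrix.sub_mulVec, Matrix.one_mulVec, (show H *ᵥ v = t • v from heigH), h11]
      funext j; simp
    have hdet : IsUnit ((1:Matrix (Fin n) (Fin n) ℂ) - H).det :=
      (Matrix.isUnit_iff_isUnit_det _).mp hUnit
    have h13 : v = 0 := by
      have := congrArg (fun w => ((1:Matrix (Fin n) (Fin n) ℂ) - H)⁻¹ *ᵥ w) h12
      simpa [Matrix.mulVec_mulVec, Matrix.nonsing_inv_mul _ hdet, Matrix.one_mulVec] using this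
    rw [h13] at hvnorm
    simp [toE] at hvnorm
  have hdet : IsUnit ((1:Matrix (Fin n) (Fin n) ℂ) - H).det :=
    (Matrix.isUnit_iff_isUnit_det _).mp hUnit
  have hQu : ((1:Matrix (Fin n) (Fin n) ℂ) - H)⁻¹ *ᵥ v = ((1:ℝ) - t)⁻¹ • v := by
    have h1 : ((1:Matrix (Fin n) (Fin n) ℂ) - H) *ᵥ (((1:ℝ) - t)⁻¹ • v) = v := by
      rw [Matrix.mulVec_smul, Matrix.sub_mulVec, Matrix.one_mulVec, (show H *ᵥ v = t • v from heigH)]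
      have h2 : v - t • v = ((1:ℝ) - t) • v := by rw [sub_smul, one_smul]
      rw [h2, smul_smul, inv_mul_cancel₀ hne, one_smul]
    have h3 := congrArg (fun w => ((1:Matrix (Fin n) (Fin n) ℂ) - H)⁻¹ *ᵥ w) h1
    simp only [Matrix.mulVec_mulVec, Matrix.nonsing_inv_mul _ hdet, Matrix.one_mulVec] at h3
    exact h3.symm
  refine ⟨v, hvnorm, ?_⟩
  rw [hQu]
  have hsmul : ‖toE (((1:ℝ) - t)⁻¹ • v)‖ = |(1 - t)⁻¹| * ‖toE v‖ := by
    have h9 : toE (((1:ℝ) - t)⁻¹ • v) = ((1:ℝ) - t)⁻¹ • toE v := rfl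
    rw [h9, norm_smul, Real.norm_eq_abs]
  rw [hsmul, hvnorm, mul_one]
  have habs : |1 - t| ≤ 1 + c := by
    rw [abs_le]; constructor <;> linarith
  rw [abs_inv]
  exact inv_anti₀ (abs_pos.mpr hne) habs

end AuxAnalysis

/-- Characterization of the recessive solution: if `(S_ν)` is nonoscillatory
and eventually controllable and `Z̃ = (X̃; Ũ)` is a conjoined basis with `X̃ₖ` invertible and
`−X̃ₖ⁻¹ ℬₖ (X̃_{k+1}*)⁻¹ ≥ 0` for `k ≥ k₀`, then `Z̃` is a recessive solution iff the
smallest eigenvalue of `−Σ_{j=k₀}^{k} X̃_j⁻¹ ℬ_j (X̃_{j+1}*)⁻¹` tends to `+∞`, i.e. for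
every `c > 0` there is `K` with `−Σ_{j=k₀}^{k} X̃_j⁻¹ ℬ_j (X̃_{j+1}*)⁻¹ − c·Iₙ ≥ 0` for all
`k ≥ K`. -/
theorem statement14 {n : ℕ} (hn : 1 ≤ n)
    (S : ℕ → Matrix (Fin n ⊕ Fin n) (Fin n ⊕ Fin n) ℂ)
    (A B C D W : ℕ → Matrix (Fin n) (Fin n) ℂ)
    (hS : ∀ k, (S k)ᴴ * Jmat n * S k = Jmat n)
    (hblocks : ∀ k, S k = Matrix.fromBlocks (A k) (B k) (C k) (D k))
    (hW : ∀ k, (W k).PosDef)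
    (nu : ℝ)
    (hnonosc : ∃ M : ℕ, ∀ N, M ≤ N → DisconjugateOn A B C D W nu M N)
    (hctrl : EventuallyControllable B D)
    (Xt Ut : ℕ → Matrix (Fin n) (Fin n) ℂ)
    (hcb : IsConjoinedBasis S W nu (fun k => Matrix.fromRows (Xt k) (Ut k)))
    (k₀ : ℕ)
    (hinv : ∀ k, k₀ ≤ k →
      IsUnit (Xt k) ∧ (-((Xt k)⁻¹ * B k * ((Xt (k + 1))ᴴ)⁻¹)).PosSemidef) :
    IsRecessive S W B nu Xt Ut ↔
      ∀ c : ℝ, 0 < c → ∃ K : ℕ, ∀ k, K ≤ k →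
        (-(∑ j ∈ Finset.Icc k₀ k, (Xt j)⁻¹ * B j * ((Xt (j + 1))ᴴ)⁻¹)
          - (c : ℂ) • (1 : Matrix (Fin n) (Fin n) ℂ)).PosSemidef := by
    classical
  have hXtu : ∀ k, k₀ ≤ k → IsUnit (Xt k) := fun k hk => (hinv k hk).1
  have hXtd : ∀ k, k₀ ≤ k → IsUnit (Xt k).det :=
    fun k hk => (Matrix.isUnit_iff_isUnit_det _).mp (hXtu k hk)
  have hXtrec : ∀ k, Xt k = A k * Xt (k+1) + B k * Ut (k+1) := by
    intro k
    have h1 : Matrix.fromRows (Xt k) (Ut k)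
        = (S k + (nu:ℂ) • Vmat S W k) * Matrix.fromRows (Xt (k+1)) (Ut (k+1)) := hcb.1 k
    rw [Snu_blocks S A B C D W hblocks nu k, Matrix.fromBlocks_mul_fromRows] at h1
    exact (fromRows_eq_iff.mp h1).1
  have hsymt : ∀ k, (Xt k)ᴴ * Ut k = (Ut k)ᴴ * Xt k := by
    intro k
    have h1 : (Matrix.fromRows (Xt k) (Ut k))ᴴ * Jmat n * Matrix.fromRows (Xt k) (Ut k) = 0 :=
      (hcb.2 k).2
    rw [wron_formula] at h1
    rwa [sub_eq_zero] at h1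
  constructor
  · -- recessive implies divergence of the sum
    intro hrec c hc
    -- transfer matrices
    let Phi : ℕ → Matrix (Fin n ⊕ Fin n) (Fin n ⊕ Fin n) ℂ :=
      fun k => Nat.rec (1 : Matrix (Fin n ⊕ Fin n) (Fin n ⊕ Fin n) ℂ)
        (fun m Pm => Pm * (S m + (nu:ℂ) • Vmat S W m)) k
    have hPhiSucc : ∀ k, Phi (k+1) = Phi k * (S k + (nu:ℂ) • Vmat S W k) := fun k => rfl
    have hPhiU : ∀ k, IsUnit (Phi k) := by
      intro k
      induction k with
      | zero => exact isUnit_one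
      | succ m ih => rw [hPhiSucc m]; exact ih.mul (Snu_isUnit S W hS hW nu m)
    have hPhiD : ∀ k, IsUnit (Phi k).det := fun k => (Matrix.isUnit_iff_isUnit_det _).mp (hPhiU k)
    let Z0 : Matrix (Fin n ⊕ Fin n) (Fin n) ℂ :=
      Matrix.fromRows (Xt k₀) (Ut k₀ - ((Xt k₀)ᴴ)⁻¹)
    let Zm : ℕ → Matrix (Fin n ⊕ Fin n) (Fin n) ℂ := fun k => (Phi k)⁻¹ * (Phi k₀ * Z0)
    have hZrec : ∀ k, Zm k = (S k + (nu:ℂ) • Vmat S W k) * Zm (k+1) := by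
      intro k
      have hs := Matrix.mul_nonsing_inv _
        ((Matrix.isUnit_iff_isUnit_det _).mp (Snu_isUnit S W hS hW nu k))
      show (Phi k)⁻¹ * (Phi k₀ * Z0)
          = (S k + (nu:ℂ) • Vmat S W k) * ((Phi (k+1))⁻¹ * (Phi k₀ * Z0))
      calc (Phi k)⁻¹ * (Phi k₀ * Z0)
          = ((S k + (nu:ℂ) • Vmat S W k) * (S k + (nu:ℂ) • Vmat S W k)⁻¹)
              * ((Phi k)⁻¹ * (Phi k₀ * Z0)) := by rw [hs, Matrix.one_mul]
        _ = (S k + (nu:ℂ) • Vmat S W k)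
              * (((S k + (nu:ℂ) • Vmat S W k)⁻¹ * (Phi k)⁻¹) * (Phi k₀ * Z0)) := by
            rw [Matrix.mul_assoc, Matrix.mul_assoc]
        _ = (S k + (nu:ℂ) • Vmat S W k) * ((Phi (k+1))⁻¹ * (Phi k₀ * Z0)) := by
            rw [hPhiSucc k, Matrix.mul_inv_rev]
    have hZk0 : Zm k₀ = Z0 := by
      show (Phi k₀)⁻¹ * (Phi k₀ * Z0) = Z0
      rw [← Matrix.mul_assoc, Matrix.nonsing_inv_mul _ (hPhiD k₀), Matrix.one_mul]
    let Xc : ℕ → Matrix (Fin n) (Fin n) ℂ := fun k => Matrix.of fun i j => Zm k (Sum.inl i) j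
    let Uc : ℕ → Matrix (Fin n) (Fin n) ℂ := fun k => Matrix.of fun i j => Zm k (Sum.inr i) j
    have hfr : ∀ k, Matrix.fromRows (Xc k) (Uc k) = Zm k := by
      intro k; ext (i|i) j <;> rfl
    -- constancy of J-products along solutions
    have hconst : ∀ (Y : ℕ → Matrix (Fin n ⊕ Fin n) (Fin n) ℂ),
        (∀ k, Y k = (S k + (nu:ℂ) • Vmat S W k) * Y (k+1)) →
        ∀ (Y' : ℕ → Matrix (Fin n ⊕ Fin n) (Fin n) ℂ),
        (∀ k, Y' k = (S k + (nu:ℂ) • Vmat S W k) * Y' (k+1)) →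
        ∀ k, (Y k)ᴴ * Jmat n * Y' k = (Y 0)ᴴ * Jmat n * Y' 0 := by
      intro Y hY Y' hY' k
      induction k with
      | zero => rfl
      | succ m ih =>
        have hstep : (Y m)ᴴ * Jmat n * Y' m = (Y (m+1))ᴴ * Jmat n * Y' (m+1) := by
          rw [hY m, hY' m, Matrix.conjTranspose_mul]
          calc (Y (m+1))ᴴ * (S m + (nu:ℂ) • Vmat S W m)ᴴ * Jmat n
                * ((S m + (nu:ℂ) • Vmat S W m) * Y' (m+1))
              = (Y (m+1))ᴴ * ((S m + (nu:ℂ) • Vmat S W m)ᴴ * Jmat n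
                * (S m + (nu:ℂ) • Vmat S W m)) * Y' (m+1) := by
                simp only [Matrix.mul_assoc]
            _ = (Y (m+1))ᴴ * Jmat n * Y' (m+1) := by
                rw [Snu_symplectic S W hS hW nu m, Matrix.mul_assoc]
        rw [← hstep]
        exact ih
    have hXtHd : IsUnit ((Xt k₀)ᴴ).det :=
      (Matrix.isUnit_iff_isUnit_det _).mp (isUnit_conjTranspose (hXtu k₀ le_rfl))
    have hZZ : ∀ k, (Zm k)ᴴ * Jmat n * Zm k = 0 := by
      have h0 : (Zm k₀)ᴴ * Jmat n * Zm k₀ = 0 := by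
        rw [hZk0]
        show (Matrix.fromRows (Xt k₀) (Ut k₀ - ((Xt k₀)ᴴ)⁻¹))ᴴ * Jmat n
            * Matrix.fromRows (Xt k₀) (Ut k₀ - ((Xt k₀)ᴴ)⁻¹) = 0
        rw [wron_formula, Matrix.conjTranspose_sub, ← Matrix.conjTranspose_nonsing_inv,
          Matrix.conjTranspose_conjTranspose, Matrix.mul_sub, Matrix.sub_mul,
          Matrix.nonsing_inv_mul _ (hXtd k₀ le_rfl), hsymt k₀,
          ← Matrix.conjTranspose_mul, Matrix.nonsing_inv_mul _ (hXtd k₀ le_rfl),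
          Matrix.conjTranspose_one]
        abel
      intro k
      have h1 := hconst Zm hZrec Zm hZrec k
      have h2 := hconst Zm hZrec Zm hZrec k₀
      rw [h1, ← h2, h0]
    have hZtrec : ∀ k, Matrix.fromRows (Xt k) (Ut k)
        = (S k + (nu:ℂ) • Vmat S W k) * Matrix.fromRows (Xt (k+1)) (Ut (k+1)) := fun k => hcb.1 k
    have hZZt : ∀ k, (Zm k)ᴴ * Jmat n * Matrix.fromRows (Xt k) (Ut k) = 1 := by
      have h0 : (Zm k₀)ᴴ * Jmat n * Matrix.fromRows (Xt k₀) (Ut k₀) = 1 := by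
        rw [hZk0]
        show (Matrix.fromRows (Xt k₀) (Ut k₀ - ((Xt k₀)ᴴ)⁻¹))ᴴ * Jmat n
            * Matrix.fromRows (Xt k₀) (Ut k₀) = 1
        rw [wron_formula, Matrix.conjTranspose_sub, ← Matrix.conjTranspose_nonsing_inv,
          Matrix.conjTranspose_conjTranspose, Matrix.sub_mul,
          Matrix.nonsing_inv_mul _ (hXtd k₀ le_rfl), hsymt k₀]
        abel
      intro k
      have h1 := hconst Zm hZrec (fun k => Matrix.fromRows (Xt k) (Ut k)) hZtrec k
      have h2 := hconst Zm hZrec (fun k => Matrix.fromRows (Xt k) (Ut k)) hZtrec k₀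
      rw [h1, ← h2, h0]
    have hrank : ∀ k, (Matrix.fromRows (Xc k) (Uc k)).rank = n := by
      intro k
      rw [hfr k]
      have h1 : (Zm k).rank = Z0.rank := by
        show ((Phi k)⁻¹ * (Phi k₀ * Z0)).rank = Z0.rank
        rw [Matrix.rank_mul_eq_right_of_isUnit_det _ _ (Matrix.isUnit_nonsing_inv_det _ (hPhiD k)),
          Matrix.rank_mul_eq_right_of_isUnit_det _ _ (hPhiD k₀)]
      rw [h1]
      apply le_antisymm
      · have h2 := Matrix.rank_le_card_width Z0
        simpa using h2
      · have h2 : Matrix.fromCols (1 : Matrix (Fin n) (Fin n) ℂ)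
            (0 : Matrix (Fin n) (Fin n) ℂ) * Z0 = Xt k₀ := by
          show Matrix.fromCols 1 0 * Matrix.fromRows (Xt k₀) (Ut k₀ - ((Xt k₀)ᴴ)⁻¹) = Xt k₀
          rw [Matrix.fromCols_mul_fromRows]
          simp
        have h3 := Matrix.rank_mul_le_right
          (Matrix.fromCols (1 : Matrix (Fin n) (Fin n) ℂ) 0) Z0
        rw [h2] at h3
        have h4 : (Xt k₀).rank = n := by
          rw [Matrix.rank_of_isUnit _ (hXtu k₀ le_rfl), Fintype.card_fin]
        omega
    have hcbZ : IsConjoinedBasis S W nu (fun k => Matrix.fromRows (Xc k) (Uc k)) := by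
      constructor
      · intro k
        show Matrix.fromRows (Xc k) (Uc k)
            = (S k + (nu:ℂ) • Vmat S W k) * Matrix.fromRows (Xc (k+1)) (Uc (k+1))
        rw [hfr k, hfr (k+1)]
        exact hZrec k
      · intro k
        refine ⟨hrank k, ?_⟩
        show (Matrix.fromRows (Xc k) (Uc k))ᴴ * Jmat n * Matrix.fromRows (Xc k) (Uc k) = 0
        rw [hfr k]
        exact hZZ k
    obtain ⟨⟨k₁, hXcu⟩, htend⟩ := hrec.2.2 Xc Uc hcbZ (fun k => by
      show (Matrix.fromRows (Xc k) (Uc k))ᴴ * Jmat n * Matrix.fromRows (Xt k) (Ut k) = 1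
      rw [hfr k]; exact hZZt k)
    -- block recurrence and Wronskian for the constructed basis
    have hXcrec : ∀ k, Xc k = A k * Xc (k+1) + B k * Uc (k+1) := by
      intro k
      have h1 : Matrix.fromRows (Xc k) (Uc k)
          = (S k + (nu:ℂ) • Vmat S W k) * Matrix.fromRows (Xc (k+1)) (Uc (k+1)) := by
        rw [hfr k, hfr (k+1)]; exact hZrec k
      rw [Snu_blocks S A B C D W hblocks nu k, Matrix.fromBlocks_mul_fromRows] at h1
      exact (fromRows_eq_iff.mp h1).1
    have hWrc : ∀ k, (Xt k)ᴴ * Uc k - (Ut k)ᴴ * Xc k = -1 := by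
      intro k
      have h1 : (Xc k)ᴴ * Ut k - (Uc k)ᴴ * Xt k = 1 := by
        have h2 := hZZt k
        rw [← hfr k, wron_formula] at h2
        exact h2
      have h3 := congrArg Matrix.conjTranspose h1
      rw [Matrix.conjTranspose_sub, Matrix.conjTranspose_mul, Matrix.conjTranspose_mul,
        Matrix.conjTranspose_conjTranspose, Matrix.conjTranspose_conjTranspose,
        Matrix.conjTranspose_one] at h3
      have h4 : (Xt k)ᴴ * Uc k - (Ut k)ᴴ * Xc k
          = -((Ut k)ᴴ * Xc k - (Xt k)ᴴ * Uc k) := by abel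
      rw [h4, h3]
    have hXck0 : Xc k₀ = Xt k₀ := by
      ext i j
      show Zm k₀ (Sum.inl i) j = Xt k₀ i j
      rw [hZk0]
      rfl
    have hsum := sum_identity A B Xt Ut Xc Uc k₀ hXtu hXtrec hXcrec hWrc hsymt
    have hQ : ∀ m, k₀ ≤ m → (Xt (m+1))⁻¹ * Xc (m+1)
        = 1 - (-(∑ j ∈ Finset.Icc k₀ m, (Xt j)⁻¹ * B j * ((Xt (j+1))ᴴ)⁻¹)) := by
      intro m hm
      rw [hsum m hm, hXck0, Matrix.nonsing_inv_mul _ (hXtd k₀ le_rfl)]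
    have hXXc : ∀ m, k₀ ≤ m → Xc (m+1)
        = Xt (m+1) * (1 - (-(∑ j ∈ Finset.Icc k₀ m, (Xt j)⁻¹ * B j * ((Xt (j+1))ᴴ)⁻¹))) := by
      intro m hm
      rw [← hQ m hm, ← Matrix.mul_assoc, Matrix.mul_nonsing_inv _ (hXtd (m+1) (by omega)),
        Matrix.one_mul]
    have hMpsd : ∀ m, k₀ ≤ m →
        (-(∑ j ∈ Finset.Icc k₀ m, (Xt j)⁻¹ * B j * ((Xt (j+1))ᴴ)⁻¹)).PosSemidef := by
      intro m hm
      rw [← Finset.sum_neg_distrib]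
      apply psd_sum
      intro j hj
      simp only [Finset.mem_Icc] at hj
      exact (hinv j hj.1).2
    -- goal: eventual positive semidefiniteness
    by_cases hex : ∃ m, k₀ ≤ m ∧
        (-(∑ j ∈ Finset.Icc k₀ m, (Xt j)⁻¹ * B j * ((Xt (j+1))ᴴ)⁻¹)
          - (c:ℂ) • 1).PosSemidef
    · obtain ⟨m0, hm0, hpsd⟩ := hex
      refine ⟨m0, fun k hk => ?_⟩
      exact psd_partial_mono _ k₀ (fun j hj => (hinv j hj).2) _ hm0 hk hpsd
    · exfalso
      push_neg at hex
      -- entries of (Xc k)⁻¹ * Xt k become small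
      set δ : ℝ := (1 + c)⁻¹ / (n + 1) with hδdef
      have hδ : 0 < δ := by
        apply div_pos (inv_pos.mpr (by linarith)) (by positivity)
      have hent : ∀ᶠ k in atTop, ∀ i j, ‖((Xc k)⁻¹ * Xt k) i j‖ < δ := by
        rw [Filter.eventually_all]
        intro i
        rw [Filter.eventually_all]
        intro j
        have h1 := tendsto_pi_nhds.mp htend i
        have h2 := tendsto_pi_nhds.mp h1 j
        have h3 : Filter.Tendsto (fun k => ((Xc k)⁻¹ * Xt k) i j) atTop (nhds 0) := by
          simpa using h2
        exact (NormedAddCommGroup.tendsto_nhds_zero.mp h3) δ hδ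
      obtain ⟨K2, hK2⟩ := Filter.eventually_atTop.mp hent
      set m := max (max k₀ k₁) K2 with hmdef
      have hmk₀ : k₀ ≤ m := le_trans (le_max_left _ _) (le_max_left _ _)
      have hmk₁ : k₁ ≤ m := le_trans (le_max_right _ _) (le_max_left _ _)
      have hmK2 : K2 ≤ m := le_max_right _ _
      have hHpsd := hMpsd m hmk₀
      have hHnot := hex m hmk₀
      have hQu : IsUnit ((1:Matrix (Fin n) (Fin n) ℂ)
          - (-(∑ j ∈ Finset.Icc k₀ m, (Xt j)⁻¹ * B j * ((Xt (j+1))ᴴ)⁻¹))) := by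
        rw [← hQ m hmk₀]
        exact (Matrix.isUnit_nonsing_inv_iff.mpr (hXtu (m+1) (by omega))).mul
          (hXcu (m+1) (by omega))
      obtain ⟨v, hv1, hv2⟩ := exists_norm_ge hc hHpsd hHnot hQu
      -- the inverse is (Xc (m+1))⁻¹ * Xt (m+1), with small entries
      have hQinv : (Xc (m+1))⁻¹ * Xt (m+1)
          = ((1:Matrix (Fin n) (Fin n) ℂ)
            - (-(∑ j ∈ Finset.Icc k₀ m, (Xt j)⁻¹ * B j * ((Xt (j+1))ᴴ)⁻¹)))⁻¹ := by
        rw [hXXc m hmk₀, Matrix.mul_inv_rev, Matrix.mul_assoc,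
          Matrix.nonsing_inv_mul _ (hXtd (m+1) (by omega)), Matrix.mul_one]
      have hsmall : ∀ i j, ‖(((1:Matrix (Fin n) (Fin n) ℂ)
          - (-(∑ j ∈ Finset.Icc k₀ m, (Xt j)⁻¹ * B j * ((Xt (j+1))ᴴ)⁻¹)))⁻¹) i j‖ ≤ δ := by
        intro i j
        rw [← hQinv]
        exact le_of_lt (hK2 (m+1) (by omega) i j)
      have hfro := frob_le_of_entries _ δ hδ.le hsmall
      have hbound := mulVec_norm_le (((1:Matrix (Fin n) (Fin n) ℂ)
          - (-(∑ j ∈ Finset.Icc k₀ m, (Xt j)⁻¹ * B j * ((Xt (j+1))ᴴ)⁻¹)))⁻¹) v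
      rw [hv1, mul_one] at hbound
      have hlt : (n:ℝ) * δ < (1 + c)⁻¹ := by
        rw [hδdef]
        rw [div_eq_mul_inv, ← mul_assoc]
        have h5 : (n:ℝ) * (1+c)⁻¹ * ((n:ℝ)+1)⁻¹ < (1+c)⁻¹ * (((n:ℝ)+1) * ((n:ℝ)+1)⁻¹) := by
          rw [mul_comm ((n:ℝ)) ((1+c)⁻¹), mul_assoc]
          apply mul_lt_mul_of_pos_left _ (inv_pos.mpr (by linarith))
          apply mul_lt_mul_of_pos_right _ (inv_pos.mpr (by positivity))
          linarith
        rw [mul_inv_cancel₀ (by positivity : ((n:ℝ)+1) ≠ 0), mul_one] at h5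
        exact h5
      have hfinal : (1+c)⁻¹ ≤ (n:ℝ) * δ := le_trans hv2 (le_trans hbound hfro)
      linarith
  · -- divergence implies recessive
    intro hdiv
    refine ⟨hcb, ⟨k₀, hinv⟩, ?_⟩
    intro X U hcbZ hnorm
    have hXrec : ∀ k, X k = A k * X (k+1) + B k * U (k+1) := by
      intro k
      have h1 : Matrix.fromRows (X k) (U k)
          = (S k + (nu:ℂ) • Vmat S W k) * Matrix.fromRows (X (k+1)) (U (k+1)) := hcbZ.1 k
      rw [Snu_blocks S A B C D W hblocks nu k, Matrix.fromBlocks_mul_fromRows] at h1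
      exact (fromRows_eq_iff.mp h1).1
    have hWr : ∀ k, (Xt k)ᴴ * U k - (Ut k)ᴴ * X k = -1 := by
      intro k
      have h1 : (X k)ᴴ * Ut k - (U k)ᴴ * Xt k = 1 := by
        have h2 := hnorm k
        rw [wron_formula] at h2
        exact h2
      have h3 := congrArg Matrix.conjTranspose h1
      rw [Matrix.conjTranspose_sub, Matrix.conjTranspose_mul, Matrix.conjTranspose_mul,
        Matrix.conjTranspose_conjTranspose, Matrix.conjTranspose_conjTranspose,
        Matrix.conjTranspose_one] at h3
      have h4 : (Xt k)ᴴ * U k - (Ut k)ᴴ * X k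
          = -((Ut k)ᴴ * X k - (Xt k)ᴴ * U k) := by abel
      rw [h4, h3]
    have hsum := sum_identity A B Xt Ut X U k₀ hXtu hXtrec hXrec hWr hsymt
    set P : Matrix (Fin n) (Fin n) ℂ := (Xt k₀)⁻¹ * X k₀ with hPdef
    have hb : ∀ v, ‖toE (P *ᵥ v)‖ ≤ frob P * ‖toE v‖ := mulVec_norm_le P
    have hb0 : (0:ℝ) ≤ frob P := frob_nonneg P
    -- eventual invertibility of X
    obtain ⟨K₁, hK₁⟩ := hdiv (frob P + 1) (by linarith)
    have hXfact : ∀ m, k₀ ≤ m → X (m+1)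
        = Xt (m+1) * (P - (-(∑ j ∈ Finset.Icc k₀ m, (Xt j)⁻¹ * B j * ((Xt (j+1))ᴴ)⁻¹))) := by
      intro m hm
      rw [← hsum m hm, ← Matrix.mul_assoc, Matrix.mul_nonsing_inv _ (hXtd (m+1) (by omega)),
        Matrix.one_mul]
    have hXunit : ∀ k, max K₁ k₀ + 1 ≤ k → IsUnit (X k) := by
      intro k hk
      obtain ⟨m, rfl⟩ : ∃ m, k = m + 1 := ⟨k - 1, by omega⟩
      have hm0 : k₀ ≤ m := by omega
      have hmK : K₁ ≤ m := by omega
      have hpn := isUnit_and_inv_entry_bound (P := P)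
        (N := -(∑ j ∈ Finset.Icc k₀ m, (Xt j)⁻¹ * B j * ((Xt (j+1))ᴴ)⁻¹))
        hb (by linarith) (hK₁ m hmK)
      rw [hXfact m hm0]
      exact (hXtu (m+1) (by omega)).mul hpn.1
    refine ⟨⟨max K₁ k₀ + 1, hXunit⟩, ?_⟩
    rw [← Filter.tendsto_add_atTop_iff_nat (max K₁ k₀ + 1)]
    refine tendsto_pi_nhds.mpr ?_
    intro i
    refine tendsto_pi_nhds.mpr ?_
    intro j
    have hzero : ((0 : Matrix (Fin n) (Fin n) ℂ) i j) = (0:ℂ) := rfl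
    apply NormedAddCommGroup.tendsto_nhds_zero.mpr
    intro ε hε
    have hcpos : (0:ℝ) < frob P + 2/ε := by positivity
    obtain ⟨K₂, hK₂⟩ := hdiv (frob P + 2/ε) hcpos
    rw [Filter.eventually_atTop]
    refine ⟨K₂, fun m hm => ?_⟩
    have hm' : m + (max K₁ k₀ + 1) = (m + max K₁ k₀) + 1 := rfl
    set mm := m + max K₁ k₀ with hmm
    have hmm0 : k₀ ≤ mm := by omega
    have hmmK : K₂ ≤ mm := by omega
    have hpn := isUnit_and_inv_entry_bound (P := P)
      (N := -(∑ j ∈ Finset.Icc k₀ mm, (Xt j)⁻¹ * B j * ((Xt (j+1))ᴴ)⁻¹))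
      hb (by
        have : (0:ℝ) < 2/ε := by positivity
        linarith) (hK₂ mm hmmK)
    have hQinv : (X (mm+1))⁻¹ * Xt (mm+1)
        = (P - (-(∑ j ∈ Finset.Icc k₀ mm, (Xt j)⁻¹ * B j * ((Xt (j+1))ᴴ)⁻¹)))⁻¹ := by
      rw [hXfact mm hmm0, Matrix.mul_inv_rev, Matrix.mul_assoc,
        Matrix.nonsing_inv_mul _ (hXtd (mm+1) (by omega)), Matrix.mul_one]
    have hb2 := hpn.2 i j
    have heq2 : frob P + 2/ε - frob P = 2/ε := by ring
    rw [heq2] at hb2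
    have h6 : ‖((X (m + (max K₁ k₀ + 1)))⁻¹ * Xt (m + (max K₁ k₀ + 1))) i j‖ ≤ (2/ε)⁻¹ := by
      rw [hm', ← hmm] at *
      rw [hQinv]
      exact hb2
    have h7 : (2/ε)⁻¹ < ε := by
      rw [inv_div]
      rw [div_lt_iff₀ (by norm_num : (0:ℝ) < 2)]
      nlinarith
    calc ‖((X (m + (max K₁ k₀ + 1)))⁻¹ * Xt (m + (max K₁ k₀ + 1))) i j‖
        ≤ (2/ε)⁻¹ := h6
      _ < ε := h7
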